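/- Let W=(w_{ij}) be a positive real m×n matrix and let R=(r_1,…,r_m), C=(c_1,…,c_n) be positive integer vectors with |R|=|C|=N. Then T(R,C;W) = (∏_{i=1}^m 1/r_i!) · (∏_{j=1}^n 1/c_j!) · ∫_{Mat(m,n)} per A(G;R,C) dG, where dG is the exponential measure associated with W. -/

import Mathlib

open scoped BigOperators
open MeasureTheory

section Helpers

variable {α β : Type*}

def gmap (γ : β → Type*) (σ : α ≃ Σ j, γ j) (j : β) (c : γ j) : {a // (σ a).1 = j} :=
  ⟨σ.symm ⟨j, c⟩, by simp⟩

lemma gmap_bij (γ : β → Type*) (σ : α ≃ Σ j, γ j) (j : β) :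
    Function.Bijective (gmap γ σ j) := by
  constructor
  · intro c c' hcc
    have := congrArg (fun p : {a // (σ a).1 = j} => σ p.1) hcc
    simpa [gmap] using this
  · rintro ⟨a, ha⟩
    subst ha
    exact ⟨(σ a).2, by simp [gmap, Sigma.eta]⟩

noncomputable def fiberEquiv (γ : β → Type*) (σ : α ≃ Σ j, γ j) (j : β) :
    {a // (σ a).1 = j} ≃ γ j := (Equiv.ofBijective _ (gmap_bij γ σ j)).symm

noncomputable def fiberDecomp [DecidableEq β] (γ : β → Type*) :
    (Σ f : α → β, ∀ j, {a // f a = j} ≃ γ j) ≃ (α ≃ Σ j, γ j) := by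
  refine Equiv.ofBijective (fun F =>
    { toFun := fun a => ⟨F.1 a, F.2 (F.1 a) ⟨a, rfl⟩⟩
      invFun := fun x => ((F.2 x.1).symm x.2).1
      left_inv := ?_
      right_inv := ?_ }) ⟨?_, ?_⟩
  · intro a
    simp
  · rintro ⟨j, c⟩
    obtain ⟨⟨a, h⟩, hc⟩ : ∃ p : {a // F.1 a = j}, (F.2 j).symm c = p := ⟨_, rfl⟩
    subst h
    dsimp only
    rw [hc]
    dsimp only
    have : (⟨a, rfl⟩ : {b // F.1 b = F.1 a}) = (F.2 (F.1 a)).symm c := hc.symm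
    exact congrArg (Sigma.mk (F.1 a)) ((congrArg (F.2 (F.1 a)) this).trans (Equiv.apply_symm_apply _ _))
  · rintro ⟨f, ψ⟩ ⟨f', ψ'⟩ h
    have h2 : ∀ a : α, (⟨f a, ψ (f a) ⟨a, rfl⟩⟩ : Σ j, γ j) = ⟨f' a, ψ' (f' a) ⟨a, rfl⟩⟩ :=
      fun a => DFunLike.congr_fun h a
    have hf : f = f' := funext fun a => (Sigma.mk.inj_iff.mp (h2 a)).1
    subst hf
    have hψ : ψ = ψ' := by
      funext j
      ext ⟨a, ha⟩
      subst ha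
      exact eq_of_heq (Sigma.mk.inj_iff.mp (h2 a)).2
    rw [hψ]
  · intro σ
    refine ⟨⟨fun a => (σ a).1, fiberEquiv γ σ⟩, ?_⟩
    apply Equiv.ext
    intro a
    dsimp only
    have h1 : gmap γ σ ((σ a).1) (fiberEquiv γ σ ((σ a).1) ⟨a, rfl⟩) = ⟨a, rfl⟩ := by
      exact Equiv.ofBijective_apply_symm_apply _ _ _
    have h2 : σ.symm ⟨(σ a).1, fiberEquiv γ σ ((σ a).1) ⟨a, rfl⟩⟩ = a :=
      congrArg Subtype.val h1
    have := congrArg σ h2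
    simpa [Sigma.eta] using this

def sigmaSubtypeEquiv {ι : Type*} (p : ι → Type*) (q : (Σ i, p i) → Prop) :
    {x : Σ i, p i // q x} ≃ Σ i, {b : p i // q ⟨i, b⟩} where
  toFun x := ⟨x.1.1, x.1.2, x.2⟩
  invFun y := ⟨⟨y.1, y.2.1⟩, y.2.2⟩
  left_inv _ := rfl
  right_inv _ := rfl

lemma card_equiv_fin {X : Type*} [Fintype X] [DecidableEq X] (k : ℕ) :
    Fintype.card (X ≃ Fin k) = if Fintype.card X = k then k.factorial else 0 := by
  split_ifs with h
  · rw [Fintype.card_equiv (Fintype.equivFinOfCardEq h), h]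
  · rw [Fintype.card_eq_zero_iff]
    exact ⟨fun e => h (by simpa using Fintype.card_congr e)⟩

lemma fiberDecomp_fst [DecidableEq β] (γ : β → Type*)
    (F : Σ f : α → β, ∀ j, {a // f a = j} ≃ γ j) (a : α) :
    ((fiberDecomp γ F) a).1 = F.1 a := rfl

lemma card_subtype_equiv_sigma [Fintype α] [DecidableEq α] [Fintype β] [DecidableEq β]
    (γ : β → Type*) [∀ j, Fintype (γ j)] [∀ j, DecidableEq (γ j)]
    (P : (α → β) → Prop) [DecidablePred P] :
    Fintype.card {σ : α ≃ Σ j, γ j // P (fun a => (σ a).1)}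
      = ∑ f : {f : α → β // P f}, ∏ j, Fintype.card ({a // f.1 a = j} ≃ γ j) := by
  rw [Fintype.card_congr (((Equiv.subtypeEquiv (fiberDecomp γ)
      (fun F => by simp only [fiberDecomp_fst])).symm).trans
      (Equiv.subtypeSigmaEquiv _ P)), Fintype.card_sigma]
  exact Finset.sum_congr rfl fun f _ => Fintype.card_pi

lemma card_fiber_maps_mul {α : Type*} [Fintype α] [DecidableEq α] {n : ℕ} (d : Fin n → ℕ)
    (hd : ∑ j, d j = Fintype.card α) :
    Fintype.card {f : α → Fin n // ∀ j, Fintype.card {a // f a = j} = d j}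
      * ∏ j, (d j).factorial = (Fintype.card α).factorial := by
  classical
  have hcardS : Fintype.card (Σ j, Fin (d j)) = Fintype.card α := by
    simp [Fintype.card_sigma, hd]
  have hall : ∀ σ : α ≃ Σ j, Fin (d j), ∀ j,
      Fintype.card {a // (σ a).1 = j} = d j := fun σ j => by
    rw [Fintype.card_congr (fiberEquiv _ σ j), Fintype.card_fin]
  have h1 : (Fintype.card α).factorial = Fintype.card (α ≃ Σ j, Fin (d j)) := by
    rw [Fintype.card_equiv (Fintype.equivOfCardEq hcardS.symm)]
  have h2 : Fintype.card (α ≃ Σ j, Fin (d j))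
      = ∑ f : {f : α → Fin n // ∀ j, Fintype.card {a // f a = j} = d j},
          ∏ j, Fintype.card ({a // f.1 a = j} ≃ Fin (d j)) :=
    (Fintype.card_congr (Equiv.subtypeUnivEquiv (fun σ => hall σ)).symm).trans
      (card_subtype_equiv_sigma (fun j => Fin (d j))
        (fun f => ∀ j, Fintype.card {a // f a = j} = d j))
  rw [h1, h2]
  rw [Finset.sum_congr rfl (fun (f : {f : α → Fin n // ∀ j, Fintype.card {a // f a = j} = d j})
    (_ : f ∈ Finset.univ) => (Finset.prod_congr rfl (fun j _ => by
      rw [card_equiv_fin, if_pos (f.2 j)]) : ∏ j, Fintype.card ({a // f.1 a = j} ≃ Fin (d j))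
        = ∏ j, (d j).factorial)), Finset.sum_const, Finset.card_univ, smul_eq_mul]

lemma card_fiber_equivs_mul {m n : ℕ} (R : Fin m → ℕ) (C : Fin n → ℕ)
    (D : Fin m → Fin n → ℕ)
    (hrow : ∀ i, ∑ j, D i j = R i) (hcol : ∀ j, ∑ i, D i j = C j) :
    Fintype.card {σ : (Σ i, Fin (R i)) ≃ Σ j, Fin (C j) //
        ∀ i j, Fintype.card {a : Fin (R i) // (σ ⟨i, a⟩).1 = j} = D i j}
      * (∏ i, ∏ j, (D i j).factorial)
      = (∏ i, (R i).factorial) * ∏ j, (C j).factorial := by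
  classical
  set P : ((Σ i, Fin (R i)) → Fin n) → Prop :=
    fun f => ∀ i j, Fintype.card {a : Fin (R i) // f ⟨i, a⟩ = j} = D i j with hP
  have hA : Fintype.card {σ : (Σ i, Fin (R i)) ≃ Σ j, Fin (C j) //
        ∀ i j, Fintype.card {a : Fin (R i) // (σ ⟨i, a⟩).1 = j} = D i j}
      = ∑ f : {f : (Σ i, Fin (R i)) → Fin n // P f},
          ∏ j, Fintype.card ({a // f.1 a = j} ≃ Fin (C j)) :=
    card_subtype_equiv_sigma (fun j => Fin (C j)) P
  have hfibcard : ∀ (f : {f : (Σ i, Fin (R i)) → Fin n // P f}) (j : Fin n),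
      Fintype.card {a : Σ i, Fin (R i) // f.1 a = j} = C j := by
    intro f j
    rw [Fintype.card_congr (sigmaSubtypeEquiv _ (fun x => f.1 x = j)), Fintype.card_sigma]
    rw [Finset.sum_congr rfl fun i _ => f.2 i j]
    exact hcol j
  have hB : Fintype.card {σ : (Σ i, Fin (R i)) ≃ Σ j, Fin (C j) //
        ∀ i j, Fintype.card {a : Fin (R i) // (σ ⟨i, a⟩).1 = j} = D i j}
      = Fintype.card {f : (Σ i, Fin (R i)) → Fin n // P f} * ∏ j, (C j).factorial := by
    rw [hA, Finset.sum_congr rfl (fun f _ => Finset.prod_congr rfl fun j _ => by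
        rw [card_equiv_fin, if_pos (hfibcard f j)]),
      Finset.sum_const, Finset.card_univ, smul_eq_mul]
  have hC : Fintype.card {f : (Σ i, Fin (R i)) → Fin n // P f}
      = ∏ i, Fintype.card {g : Fin (R i) → Fin n //
          ∀ j, Fintype.card {a // g a = j} = D i j} := by
    have e1 : {f : (Σ i, Fin (R i)) → Fin n // P f}
        ≃ {g : Π i, (Fin (R i) → Fin n) //
            ∀ i, (∀ j, Fintype.card {a // g i a = j} = D i j)} :=
      Equiv.subtypeEquiv (Equiv.piCurry fun _ _ => Fin n) (fun f => Iff.rfl)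
    have e2 : {g : Π i, (Fin (R i) → Fin n) //
            ∀ i, (∀ j, Fintype.card {a // g i a = j} = D i j)}
        ≃ Π i, {g : Fin (R i) → Fin n // ∀ j, Fintype.card {a // g a = j} = D i j} :=
      Equiv.subtypePiEquivPi (β := fun i => Fin (R i) → Fin n)
        (p := fun i g => ∀ j, Fintype.card {a // g a = j} = D i j)
    rw [Fintype.card_congr (e1.trans e2), Fintype.card_pi]
  have hD : ∀ i, Fintype.card {g : Fin (R i) → Fin n //
      ∀ j, Fintype.card {a // g a = j} = D i j} * ∏ j, (D i j).factorial
        = (R i).factorial := by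
    intro i
    have := card_fiber_maps_mul (α := Fin (R i)) (D i) (by simp [hrow i])
    simpa using this
  rw [hB, hC, mul_comm _ (∏ j, (C j).factorial), mul_assoc, ← Finset.prod_mul_distrib]
  rw [Finset.prod_congr rfl fun i _ => hD i, mul_comm]

lemma prod_comp_fiber {A B M : Type*} [Fintype A] [Fintype B] [DecidableEq B] [CommMonoid M]
    (g : A → B) (h : B → M) : ∏ a, h (g a) = ∏ b, h b ^ Fintype.card {a // g a = b} := by
  rw [← Fintype.prod_fiberwise g (fun a => h (g a))]
  refine Finset.prod_congr rfl fun b _ => ?_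
  rw [Finset.prod_congr rfl (fun (a : {a // g a = b}) _ => by rw [a.2]), Finset.prod_const,
    Finset.card_univ]

lemma sum_card_fiber {A B : Type*} [Fintype A] [Fintype B] [DecidableEq B] (g : A → B) :
    ∑ b, Fintype.card {a // g a = b} = Fintype.card A := by
  rw [← Fintype.card_sigma]
  exact Fintype.card_congr (Equiv.sigmaFiberEquiv g)

open Real Set in
lemma oneDim_eq_indicator (w : ℝ) (d : ℕ) :
    (fun x : ℝ => (if 0 < x then w⁻¹ * Real.exp (-x / w) else 0) * x ^ d)
      = Set.indicator (Set.Ioi 0) (fun x => w⁻¹ * Real.exp (-x / w) * x ^ d) := by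
  funext x
  by_cases h : (0:ℝ) < x <;> simp [Set.indicator, h]

open Real Set in
lemma oneDim_integrable {w : ℝ} (hw : 0 < w) (d : ℕ) :
    Integrable (fun x : ℝ => (if 0 < x then w⁻¹ * Real.exp (-x / w) else 0) * x ^ d) := by
  rw [oneDim_eq_indicator, integrable_indicator_iff measurableSet_Ioi]
  have h := (integrableOn_rpow_mul_exp_neg_mul_rpow (p := 1) (s := (d:ℝ)) (b := w⁻¹)
    (lt_of_lt_of_le neg_one_lt_zero (Nat.cast_nonneg d)) zero_lt_one
    (inv_pos.mpr hw)).const_mul w⁻¹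
  refine IntegrableOn.congr_fun h (fun x hx => ?_) measurableSet_Ioi
  rw [Real.rpow_one, Real.rpow_natCast]
  rw [neg_div, div_eq_inv_mul]
  ring

open Real Set in
lemma oneDim_integral {w : ℝ} (hw : 0 < w) (d : ℕ) :
    ∫ x : ℝ, (if 0 < x then w⁻¹ * Real.exp (-x / w) else 0) * x ^ d
      = d.factorial * w ^ d := by
  rw [oneDim_eq_indicator, integral_indicator measurableSet_Ioi]
  have h1 : ∫ x in Set.Ioi (0:ℝ), w⁻¹ * Real.exp (-x/w) * x ^ d
      = w⁻¹ * ∫ x in Set.Ioi (0:ℝ), x ^ (((d:ℝ)+1)-1) * Real.exp (-(w⁻¹*x)) := by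
    rw [← integral_const_mul]
    refine setIntegral_congr_fun measurableSet_Ioi fun x hx => ?_
    have : ((d:ℝ)+1)-1 = ((d:ℕ):ℝ) := by ring
    rw [this, Real.rpow_natCast, neg_div, div_eq_inv_mul]
    ring
  rw [h1, Real.integral_rpow_mul_exp_neg_mul_Ioi (by positivity : (0:ℝ) < (d:ℝ)+1)
    (inv_pos.mpr hw)]
  rw [one_div, inv_inv]
  have h2 : w ^ ((d:ℝ)+1) = w ^ (d+1) := by
    rw [show ((d:ℝ)+1) = ((d+1 : ℕ):ℝ) by push_cast; ring, Real.rpow_natCast]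
  rw [h2, Real.Gamma_nat_eq_factorial, pow_succ]
  field_simp

lemma density_measurable {m n : ℕ} (W : Fin m → Fin n → ℝ) :
    Measurable (fun G : Fin m → Fin n → ℝ => (∏ i, ∏ j,
      if 0 < G i j then (W i j)⁻¹ * Real.exp (-(G i j) / W i j) else 0)) := by
  apply Finset.measurable_prod
  intro i _
  apply Finset.measurable_prod
  intro j _
  have hmeas : Measurable fun G : Fin m → Fin n → ℝ => G i j :=
    (measurable_pi_apply j).comp (measurable_pi_apply i)
  have h1 : Measurable fun x : ℝ => if 0 < x then (W i j)⁻¹ * Real.exp (-x / W i j) else 0 := by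
    refine Measurable.ite ?_ (by fun_prop) measurable_const
    exact measurableSet_Ioi
  exact h1.comp hmeas

lemma integral_density_monomial {m n : ℕ} (W : Fin m → Fin n → ℝ) (hW : ∀ i j, 0 < W i j)
    (D : Fin m → Fin n → ℕ) :
    ∫ G : Fin m → Fin n → ℝ, ∏ i, ∏ j,
        ((if 0 < G i j then (W i j)⁻¹ * Real.exp (-(G i j) / W i j) else 0) * (G i j) ^ D i j)
      = ∏ i, ∏ j, ((D i j).factorial : ℝ) * W i j ^ D i j := by
  rw [MeasureTheory.integral_fintype_prod_volume_eq_prod (f := fun i (y : Fin n → ℝ) =>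
    ∏ j, ((if 0 < y j then (W i j)⁻¹ * Real.exp (-(y j) / W i j) else 0) * (y j) ^ D i j))]
  refine Finset.prod_congr rfl fun i _ => ?_
  rw [MeasureTheory.integral_fintype_prod_volume_eq_prod (ι := Fin n) (f := fun j (x : ℝ) =>
    (if 0 < x then (W i j)⁻¹ * Real.exp (-x / W i j) else 0) * x ^ D i j)]
  exact Finset.prod_congr rfl fun j _ => oneDim_integral (hW i j) (D i j)

lemma integrable_density_monomial {m n : ℕ} (W : Fin m → Fin n → ℝ)
    (hW : ∀ i j, 0 < W i j) (D : Fin m → Fin n → ℕ) :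
    Integrable (fun G : Fin m → Fin n → ℝ => ∏ i, ∏ j,
      ((if 0 < G i j then (W i j)⁻¹ * Real.exp (-(G i j) / W i j) else 0) * (G i j) ^ D i j)) :=
  Integrable.fintype_prod_dep (f := fun i (y : Fin n → ℝ) =>
      ∏ j, ((if 0 < y j then (W i j)⁻¹ * Real.exp (-(y j) / W i j) else 0) * (y j) ^ D i j))
    fun i => Integrable.fintype_prod (f := fun j (x : ℝ) =>
      (if 0 < x then (W i j)⁻¹ * Real.exp (-x / W i j) else 0) * x ^ D i j)
    fun j => oneDim_integrable (hW i j) (D i j)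

end Helpers
/-- The total weight `T(R,C;W)` of contingency tables with row sums `R`,
column sums `C`, and weight `∏ W i j ^ D i j` (with the convention `0 ^ 0 = 1`). -/
noncomputable def tableWeight {m n : ℕ} (R : Fin m → ℕ) (C : Fin n → ℕ)
    (W : Fin m → Fin n → ℝ) : ℝ :=
  ∑' D : {D : Fin m → Fin n → ℕ //
      (∀ i, ∑ j, D i j = R i) ∧ (∀ j, ∑ i, D i j = C j)},
    ∏ i, ∏ j, W i j ^ D.1 i j

/-- The permanent of a (square, `|ι| = |κ|`) matrix, as a sum over bijections. -/
noncomputable def perm {ι κ : Type*} [Fintype ι] [Fintype κ] [DecidableEq ι] [DecidableEq κ]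
    (A : Matrix ι κ ℝ) : ℝ :=
  ∑ σ : ι ≃ κ, ∏ i, A i (σ i)

/-- The `N × N` block matrix `A(G;R,C)` whose `(i,j)`-th block, of size `R i × C j`,
is filled with copies of `G i j`. -/
def blockMat {m n : ℕ} (G : Fin m → Fin n → ℝ) (R : Fin m → ℕ) (C : Fin n → ℕ) :
    Matrix ((i : Fin m) × Fin (R i)) ((j : Fin n) × Fin (C j)) ℝ :=
  fun a b => G a.1 b.1

/-- The exponential measure `dG` on `Mat(m,n)` associated with a positive matrix `W`:
its density w.r.t. Lebesgue measure is `∏ i j, (W i j)⁻¹ exp (-(G i j) / W i j)` on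
matrices with all entries positive, and `0` elsewhere. -/
noncomputable def expMeasure {m n : ℕ} (W : Fin m → Fin n → ℝ) :
    Measure (Fin m → Fin n → ℝ) :=
  volume.withDensity fun G =>
    ENNReal.ofReal (∏ i, ∏ j,
      if 0 < G i j then (W i j)⁻¹ * Real.exp (-(G i j) / W i j) else 0)

theorem tableWeight_eq_integral_perm {m n N : ℕ}
    (W : Fin m → Fin n → ℝ) (hW : ∀ i j, 0 < W i j)
    (R : Fin m → ℕ) (C : Fin n → ℕ)
    (hRpos : ∀ i, 0 < R i) (hCpos : ∀ j, 0 < C j)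
    (hRN : ∑ i, R i = N) (hCN : ∑ j, C j = N) :
    tableWeight R C W =
      (∏ i, (1 : ℝ) / (Nat.factorial (R i) : ℝ)) *
      (∏ j, (1 : ℝ) / (Nat.factorial (C j) : ℝ)) *
      ∫ G, perm (blockMat G R C) ∂(expMeasure W) := by
  classical
  set ρ : (Fin m → Fin n → ℝ) → ℝ := fun G => ∏ i, ∏ j,
    if 0 < G i j then (W i j)⁻¹ * Real.exp (-(G i j) / W i j) else 0 with hρ
  have hρnn : ∀ G, 0 ≤ ρ G := fun G =>
    Finset.prod_nonneg fun i _ => Finset.prod_nonneg fun j _ => by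
      split_ifs with h
      · have := hW i j
        positivity
      · exact le_rfl
  set tbl : ((Σ i, Fin (R i)) ≃ Σ j, Fin (C j)) → Fin m → Fin n → ℕ := fun σ i j =>
    Fintype.card {a : Fin (R i) // (σ ⟨i, a⟩).1 = j} with htbl
  have htblrow : ∀ σ i, ∑ j, tbl σ i j = R i := fun σ i => by
    simpa using sum_card_fiber (fun a : Fin (R i) => (σ ⟨i, a⟩).1)
  have htblcol : ∀ σ j, ∑ i, tbl σ i j = C j := fun σ j => by
    have h1 : Fintype.card {x : Σ i, Fin (R i) // (σ x).1 = j} = ∑ i, tbl σ i j := by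
      rw [Fintype.card_congr (sigmaSubtypeEquiv (fun i => Fin (R i)) (fun x => (σ x).1 = j)),
        Fintype.card_sigma]
    rw [← h1, Fintype.card_congr (fiberEquiv _ σ j), Fintype.card_fin]
  -- the finite type of contingency tables
  set TT := {D : Fin m → Fin n → ℕ //
      (∀ i, ∑ j, D i j = R i) ∧ (∀ j, ∑ i, D i j = C j)} with hTT
  have hbound : ∀ (D : TT) i j, D.1 i j < N + 1 := by
    intro D i j
    have h1 : D.1 i j ≤ R i := (D.2.1 i) ▸
      Finset.single_le_sum (fun _ _ => Nat.zero_le _) (Finset.mem_univ j)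
    have h2 : R i ≤ N := hRN ▸
      Finset.single_le_sum (fun _ _ => Nat.zero_le _) (Finset.mem_univ i)
    omega
  haveI : Finite TT := by
    refine Finite.of_injective
      (fun D : TT => fun i j => (⟨D.1 i j, hbound D i j⟩ : Fin (N+1))) ?_
    intro D D' h
    refine Subtype.ext (funext fun i => funext fun j => ?_)
    exact congrArg Fin.val (congrFun (congrFun h i) j)
  haveI : Fintype TT := Fintype.ofFinite TT
  set t : ((Σ i, Fin (R i)) ≃ Σ j, Fin (C j)) → TT :=
    fun σ => ⟨tbl σ, htblrow σ, htblcol σ⟩ with ht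
  -- Step 1 : unfold the density
  have hmeas : Measurable fun G => (ρ G).toNNReal := (density_measurable W).real_toNNReal
  have step1 : ∫ G, perm (blockMat G R C) ∂(expMeasure W)
      = ∫ G, ρ G * perm (blockMat G R C) := by
    have hW1 : expMeasure W = volume.withDensity fun G => ((ρ G).toNNReal : ENNReal) := rfl
    rw [hW1, integral_withDensity_eq_integral_smul hmeas]
    congr 1
    funext G
    rw [NNReal.smul_def, Real.coe_toNNReal _ (hρnn G), smul_eq_mul]
  -- Step 2 : pointwise expansion of the permanent
  have step2 : ∀ G, ρ G * perm (blockMat G R C)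
      = ∑ σ : (Σ i, Fin (R i)) ≃ Σ j, Fin (C j), ∏ i, ∏ j,
          ((if 0 < G i j then (W i j)⁻¹ * Real.exp (-(G i j) / W i j) else 0)
            * (G i j) ^ tbl σ i j) := by
    intro G
    rw [perm, Finset.mul_sum]
    refine Finset.sum_congr rfl fun σ _ => ?_
    have hp : ∏ a : Σ i, Fin (R i), blockMat G R C a (σ a)
        = ∏ i, ∏ j, (G i j) ^ tbl σ i j := by
      rw [← Finset.univ_sigma_univ, Finset.prod_sigma]
      refine Finset.prod_congr rfl fun i _ => ?_
      exact prod_comp_fiber (fun a : Fin (R i) => (σ ⟨i, a⟩).1) (fun j => G i j)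
    rw [hp, ← Finset.prod_mul_distrib]
    exact Finset.prod_congr rfl fun i _ => (Finset.prod_mul_distrib).symm
  -- Step 3 : integrate term by term
  have step3 : ∫ G, perm (blockMat G R C) ∂(expMeasure W)
      = ∑ σ : (Σ i, Fin (R i)) ≃ Σ j, Fin (C j),
          ∏ i, ∏ j, ((tbl σ i j).factorial : ℝ) * W i j ^ tbl σ i j := by
    rw [step1, integral_congr_ae (Filter.EventuallyEq.of_eq (funext step2)),
      integral_finset_sum _ (fun σ _ => integrable_density_monomial W hW (tbl σ))]
    exact Finset.sum_congr rfl fun σ _ => integral_density_monomial W hW (tbl σ)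
  -- Step 4 : group the bijections by their contingency table
  have hcount : ∀ D : TT, Fintype.card {σ // t σ = D} * (∏ i, ∏ j, (D.1 i j).factorial)
      = (∏ i, (R i).factorial) * ∏ j, (C j).factorial := by
    intro D
    have he : Fintype.card {σ // t σ = D}
        = Fintype.card {σ : (Σ i, Fin (R i)) ≃ Σ j, Fin (C j) //
            ∀ i j, Fintype.card {a : Fin (R i) // (σ ⟨i, a⟩).1 = j} = D.1 i j} := by
      refine Fintype.card_congr (Equiv.subtypeEquivRight fun σ => ?_)
      constructor
      · rintro rfl
        intro i j
        rfl
      · intro h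
        exact Subtype.ext (funext fun i => funext fun j => h i j)
    rw [he]
    exact card_fiber_equivs_mul R C D.1 D.2.1 D.2.2
  have step4 : (∑ σ : (Σ i, Fin (R i)) ≃ Σ j, Fin (C j),
        ∏ i, ∏ j, ((tbl σ i j).factorial : ℝ) * W i j ^ tbl σ i j)
      = ((∏ i, (R i).factorial : ℕ) : ℝ) * ((∏ j, (C j).factorial : ℕ) : ℝ) *
        ∑ D : TT, ∏ i, ∏ j, W i j ^ D.1 i j := by
    rw [← Fintype.sum_fiberwise t
      (fun σ => ∏ i, ∏ j, ((tbl σ i j).factorial : ℝ) * W i j ^ tbl σ i j)]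
    have hper : ∀ D : TT,
        (∑ σ : {σ // t σ = D}, ∏ i, ∏ j, ((tbl σ.1 i j).factorial : ℝ) * W i j ^ tbl σ.1 i j)
          = (((∏ i, (R i).factorial : ℕ) : ℝ) * ((∏ j, (C j).factorial : ℕ) : ℝ))
            * ∏ i, ∏ j, W i j ^ D.1 i j := by
      intro D
      have hconst : ∀ σ : {σ // t σ = D},
          (∏ i, ∏ j, ((tbl σ.1 i j).factorial : ℝ) * W i j ^ tbl σ.1 i j)
            = (∏ i, ∏ j, ((D.1 i j).factorial : ℝ)) * ∏ i, ∏ j, W i j ^ D.1 i j := by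
        intro σ
        have htv : tbl σ.1 = D.1 := congrArg Subtype.val σ.2
        simp only [htv, ← Finset.prod_mul_distrib]
      rw [Finset.sum_congr rfl (fun σ _ => hconst σ), Finset.sum_const, Finset.card_univ,
        nsmul_eq_mul]
      have hcast : (Fintype.card {σ // t σ = D} : ℝ) * (∏ i, ∏ j, ((D.1 i j).factorial : ℝ))
          = ((∏ i, (R i).factorial : ℕ) : ℝ) * ((∏ j, (C j).factorial : ℕ) : ℝ) := by
        exact_mod_cast hcount D
      rw [← mul_assoc, hcast]
    rw [Finset.sum_congr rfl fun D _ => hper D]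
    exact (Finset.mul_sum _ _ _).symm
  -- conclusion
  have hTW : tableWeight R C W = ∑ D : TT, ∏ i, ∏ j, W i j ^ D.1 i j := by
    rw [tableWeight, tsum_fintype]
  rw [hTW, step3, step4]
  have hRfac : (∏ i, (1 : ℝ) / (Nat.factorial (R i) : ℝ))
      * ((∏ i, (R i).factorial : ℕ) : ℝ) = 1 := by
    push_cast
    rw [← Finset.prod_mul_distrib]
    refine Finset.prod_eq_one fun i _ => ?_
    rw [one_div, inv_mul_cancel₀]
    exact_mod_cast (Nat.factorial_ne_zero (R i))
  have hCfac : (∏ j, (1 : ℝ) / (Nat.factorial (C j) : ℝ))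
      * ((∏ j, (C j).factorial : ℕ) : ℝ) = 1 := by
    push_cast
    rw [← Finset.prod_mul_distrib]
    refine Finset.prod_eq_one fun j _ => ?_
    rw [one_div, inv_mul_cancel₀]
    exact_mod_cast (Nat.factorial_ne_zero (C j))
  calc (∑ D : TT, ∏ i, ∏ j, W i j ^ D.1 i j)
      = ((∏ i, (1 : ℝ) / (Nat.factorial (R i) : ℝ)) * ((∏ i, (R i).factorial : ℕ) : ℝ))
        * ((∏ j, (1 : ℝ) / (Nat.factorial (C j) : ℝ)) * ((∏ j, (C j).factorial : ℕ) : ℝ))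
        * (∑ D : TT, ∏ i, ∏ j, W i j ^ D.1 i j) := by rw [hRfac, hCfac]; ring
    _ = _ := by ring
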